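/- arXiv:1209.2220 — 14 statements merged into one kernel-verified Lean document; each statement's English description precedes it below -/
import Mathlib

section
/- Let A be an integral domain. Then A is absolutely integrally closed if and only if A has no proper integral ring extension which is an integral domain (equivalently: every injective integral ring map from A into an integral domain is surjective). -/
/-- An integral domain `A` is *absolutely integrally closed* if it is integrally closed in its
fraction field and the fraction field is algebraically closed; equivalently (for domains),
every monic polynomial of positive degree over `A` has a root in `A`
(and hence splits into linear factors). -/
def AbsolutelyIntegrallyClosed (A : Type*) [CommRing A] : Prop :=
  ∀ p : Polynomial A, p.Monic → 0 < p.natDegree → ∃ x : A, p.IsRoot x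

open Polynomial

/-- key induction for the forward direction -/
lemma AIC.root_lift {A D : Type*} [CommRing A] [Nontrivial A] [CommRing D] [IsDomain D]
    (h : AbsolutelyIntegrallyClosed A) (φ : A →+* D) (d : D) :
    ∀ n (p : Polynomial A), p.natDegree = n → p.Monic → (p.map φ).IsRoot d →
      ∃ a : A, φ a = d := by
  intro n
  induction n with
  | zero =>
    intro p hdeg hm hroot
    rw [hm.natDegree_eq_zero.mp hdeg] at hroot
    simp [IsRoot] at hroot
  | succ n ih =>
    intro p hdeg hm hroot
    obtain ⟨x, hx⟩ := h p hm (by omega)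
    obtain ⟨q, hq⟩ := (dvd_iff_isRoot.mpr hx : (X - C x) ∣ p)
    have hmq : q.Monic := (monic_X_sub_C x).of_mul_monic_left (hq ▸ hm)
    have hdq : q.natDegree = n := by
      have := hdeg
      rw [hq, (monic_X_sub_C x).natDegree_mul hmq, natDegree_X_sub_C] at this
      omega
    have : (X - C (φ x)) * (q.map φ) = p.map φ := by
      rw [hq, Polynomial.map_mul, Polynomial.map_sub, map_X, map_C]
    rw [IsRoot, ← this, eval_mul] at hroot
    rcases mul_eq_zero.mp hroot with h1 | h2
    · refine ⟨x, ?_⟩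
      have : d = φ x := by simpa [sub_eq_zero] using h1
      exact this.symm
    · exact ih q hdq hmq h2


/-- An integral domain `A` is absolutely integrally closed if and only if every injective
integral ring map from `A` into an integral domain is surjective (i.e. `A` has no proper
integral extension which is a domain). -/
theorem absolutelyIntegrallyClosed_iff_no_proper_integral_extension
    {A : Type u} [CommRing A] [IsDomain A] :
    AbsolutelyIntegrallyClosed A ↔
      ∀ (D : Type u) [CommRing D] [IsDomain D] (φ : A →+* D),
        Function.Injective φ → φ.IsIntegral → Function.Surjective φ := by
  constructor
  · intro h D _ _ φ hinj hint d
    obtain ⟨p, hm, hroot⟩ := hint d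
    exact AIC.root_lift h φ d p.natDegree p rfl hm (by rwa [IsRoot, eval_map])
  · intro h p hm hdeg
    set K := AlgebraicClosure (FractionRing A) with hK
    let f : A →+* K := (algebraMap (FractionRing A) K).comp (algebraMap A (FractionRing A))
    have hfinj : Function.Injective f :=
      (algebraMap (FractionRing A) K).injective.comp (IsFractionRing.injective A _)
    letI : Algebra A K := f.toAlgebra
    have hpd : (p.map f).degree ≠ 0 := by
      have : (p.map f).natDegree = p.natDegree := hm.natDegree_map f
      intro hc
      have := natDegree_eq_zero_iff_degree_le_zero.mpr hc.le
      omega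
    obtain ⟨α, hα⟩ := IsAlgClosed.exists_root (p.map f) hpd
    have hαint : IsIntegral A α := ⟨p, hm, by rwa [IsRoot, eval_map] at hα⟩
    let D := Algebra.adjoin A ({α} : Set K)
    have hDint : Algebra.IsIntegral A D := Algebra.IsIntegral.adjoin (by simpa using hαint)
    have hsurj := h D (algebraMap A D)
      (fun a b hab => hfinj (congrArg Subtype.val hab))
      (fun x => Algebra.IsIntegral.isIntegral (R := A) x)
    obtain ⟨a, ha⟩ := hsurj ⟨α, Algebra.subset_adjoin rfl⟩
    refine ⟨a, ?_⟩
    have hfa : f a = α := congrArg Subtype.val ha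
    have : f (p.eval a) = 0 := by
      rw [← Polynomial.eval₂_hom f a, ← Polynomial.eval_map, hfa]
      exact hα
    exact hfinj (by simpa using this)
end

section
/- Let A be an absolutely integrally closed integral domain, D an integral domain, and φ : A → D an integral ring homomorphism. Then φ is surjective, and D is an absolutely integrally closed domain. -/
open Polynomial

lemma aux_surj {A D : Type*} [CommRing A] [IsDomain A] [CommRing D] [IsDomain D]
    (hA : AbsolutelyIntegrallyClosed A) (φ : A →+* D) (d : D) :
    ∀ n : ℕ, ∀ p : Polynomial A, p.natDegree ≤ n → p.Monic → p.eval₂ φ d = 0 →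
      ∃ a : A, φ a = d := by
  intro n
  induction n with
  | zero =>
    intro p hdeg hm hev
    have : p = 1 := hm.natDegree_eq_zero.mp (Nat.le_zero.mp hdeg)
    rw [this] at hev
    simp at hev
  | succ n ih =>
    intro p hdeg hm hev
    rcases Nat.eq_zero_or_pos p.natDegree with h0 | hpos
    · have : p = 1 := hm.natDegree_eq_zero.mp h0
      rw [this] at hev; simp at hev
    · obtain ⟨a, ha⟩ := hA p hm hpos
      have hfac : (X - C a) * (p /ₘ (X - C a)) = p := mul_divByMonic_eq_iff_isRoot.mpr ha
      set q := p /ₘ (X - C a) with hq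
      have hmq : q.Monic := by
        have := hm
        rw [← hfac] at this
        exact (monic_X_sub_C a).of_mul_monic_left this
      have hdq : q.natDegree ≤ n := by
        have : p.natDegree = 1 + q.natDegree := by
          rw [← hfac, (monic_X_sub_C a).natDegree_mul hmq, natDegree_X_sub_C]
        omega
      rw [← hfac, eval₂_mul] at hev
      rcases mul_eq_zero.mp hev with h | h
      · refine ⟨a, ?_⟩
        simp only [eval₂_sub, eval₂_X, eval₂_C] at h
        exact (sub_eq_zero.mp h).symm
      · exact ih q hdq hmq h

/-- If `A` is an absolutely integrally closed domain, `D` is a domain and `φ : A → D` is an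
integral ring homomorphism, then `φ` is surjective and `D` is absolutely integrally closed. -/
theorem surjective_and_absolutelyIntegrallyClosed_of_isIntegral
    {A D : Type*} [CommRing A] [IsDomain A] [CommRing D] [IsDomain D]
    (hA : AbsolutelyIntegrallyClosed A) (φ : A →+* D) (hφ : φ.IsIntegral) :
    Function.Surjective φ ∧ AbsolutelyIntegrallyClosed D := by
  have hsurj : Function.Surjective φ := by
    intro d
    obtain ⟨p, hm, hev⟩ := hφ d
    exact aux_surj hA φ d p.natDegree p le_rfl hm hev
  refine ⟨hsurj, ?_⟩
  intro p hm hdeg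
  have hlift : p ∈ Polynomial.lifts φ := by
    obtain ⟨q, hq⟩ := (Polynomial.map_surjective φ hsurj) p
    exact ⟨q, hq⟩
  obtain ⟨q, hq, hqdeg, hqm⟩ := Polynomial.lifts_and_degree_eq_and_monic hlift hm
  have hqnd : 0 < q.natDegree := by
    have := natDegree_eq_of_degree_eq hqdeg
    omega
  obtain ⟨a, ha⟩ := hA q hqm hqnd
  refine ⟨φ a, ?_⟩
  rw [IsRoot, ← hq, eval_map, eval₂_hom, ha, map_zero]
end

section
/- Let A be an integral domain and let f₁, …, f_n ∈ A generate the unit ideal, (f₁, …, f_n) = A. If for every i the localization A_{f_i} is an absolutely integrally closed domain, then A is an absolutely integrally closed domain. -/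
open Polynomial

/-- An absolutely integrally closed domain is integrally closed in any field containing it. -/
lemma AbsolutelyIntegrallyClosed.exists_algebraMap_eq {B L : Type*} [CommRing B] [IsDomain B]
    [Field L] [Algebra B L] (hinj : Function.Injective (algebraMap B L))
    (hB : AbsolutelyIntegrallyClosed B) {α : L} (hα : IsIntegral B α) :
    ∃ b : B, algebraMap B L b = α := by
  obtain ⟨p, hp, hroot⟩ := hα
  suffices H : ∀ d (p : B[X]), p.natDegree ≤ d → p.Monic → Polynomial.aeval α p = 0 →
      ∃ b : B, algebraMap B L b = α from H p.natDegree p le_rfl hp hroot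
  clear hp hroot p
  intro d
  induction d with
  | zero =>
    intro p hdeg hp hroot
    rw [hp.natDegree_eq_zero.mp (Nat.le_zero.mp hdeg)] at hroot
    simp at hroot
  | succ d ih =>
    intro p hdeg hp hroot
    rcases Nat.eq_zero_or_pos p.natDegree with h0 | h0
    · rw [hp.natDegree_eq_zero.mp h0] at hroot
      simp at hroot
    obtain ⟨x, hx⟩ := hB p hp h0
    obtain ⟨q, hq⟩ := (dvd_iff_isRoot).mpr hx
    have hqmonic : q.Monic := (monic_X_sub_C x).of_mul_monic_left (hq ▸ hp)
    have hqdeg : q.natDegree ≤ d := by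
      have h1 : p.natDegree = 1 + q.natDegree := by
        rw [hq, natDegree_mul (X_sub_C_ne_zero x) hqmonic.ne_zero, natDegree_X_sub_C]
      omega
    rw [hq, map_mul] at hroot
    rcases mul_eq_zero.mp hroot with h | h
    · refine ⟨x, ?_⟩
      have : α - algebraMap B L x = 0 := by simpa using h
      exact (sub_eq_zero.mp this).symm
    · exact ih q hqdeg hqmonic h

/-- If `A` is a domain, `f₁, …, f_n ∈ A` generate the unit ideal and each localization
`A_{f i}` is absolutely integrally closed, then `A` is absolutely integrally closed. -/
theorem absolutelyIntegrallyClosed_of_cover {A : Type*} [CommRing A] [IsDomain A]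
    {n : ℕ} (f : Fin n → A) (hf : Ideal.span (Set.range f) = ⊤)
    (h : ∀ i, AbsolutelyIntegrallyClosed (Localization.Away (f i))) :
    AbsolutelyIntegrallyClosed A := by
  intro p hp hdeg
  set K := FractionRing A
  -- there is some `i` with `f i ≠ 0`
  have hex : ∃ i, f i ≠ 0 := by
    by_contra hc
    push_neg at hc
    have : Ideal.span (Set.range f) ≤ ⊥ := by
      rw [Ideal.span_le]
      rintro _ ⟨i, rfl⟩
      simp [hc i]
    rw [hf] at this
    exact one_ne_zero (Ideal.mem_bot.mp (this trivial))
  obtain ⟨i₀, hi₀⟩ := hex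
  -- set up the algebra structures on the localizations mapping into `K`
  have setup : ∀ i, f i ≠ 0 →
      (∃ α : K, Polynomial.eval₂ (algebraMap A K) α p = 0) ∧
      ∀ β : K, Polynomial.eval₂ (algebraMap A K) β p = 0 →
        ∃ (m : ℕ) (a : A), algebraMap A K (f i ^ m) * β = algebraMap A K a := by
    intro i hi
    set B := Localization.Away (f i)
    have hle : Submonoid.powers (f i) ≤ nonZeroDivisors A :=
      powers_le_nonZeroDivisors_of_noZeroDivisors hi
    letI : Algebra B K :=
      IsLocalization.localizationAlgebraOfSubmonoidLe B K (Submonoid.powers (f i)) (nonZeroDivisors A) hle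
    haveI : IsScalarTower A B K :=
      IsLocalization.localization_isScalarTower_of_submonoid_le B K (Submonoid.powers (f i))
        (nonZeroDivisors A) hle
    haveI : IsDomain B := IsLocalization.isDomain_localization hle
    haveI : IsFractionRing B K :=
      IsFractionRing.isFractionRing_of_isLocalization (Submonoid.powers (f i)) B K hle
    -- the mapped polynomial over B
    have hpm : (p.map (algebraMap A B)).Monic := hp.map _
    have hpmdeg : 0 < (p.map (algebraMap A B)).natDegree := by
      rwa [hp.natDegree_map]
    obtain ⟨x, hx⟩ := h i (p.map (algebraMap A B)) hpm hpmdeg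
    constructor
    · refine ⟨algebraMap B K x, ?_⟩
      have : algebraMap B K ((p.map (algebraMap A B)).eval x) = 0 := by rw [hx]; simp
      rwa [Polynomial.eval_map, Polynomial.hom_eval₂, ← IsScalarTower.algebraMap_eq] at this
    · intro β hβ
      -- β is integral over B, hence in B, hence of the form a / f i ^ m
      have hint : IsIntegral B β := by
        refine ⟨p.map (algebraMap A B), hpm, ?_⟩
        show Polynomial.eval₂ (algebraMap B K) β (p.map (algebraMap A B)) = 0
        rw [Polynomial.eval₂_map, ← IsScalarTower.algebraMap_eq]
        exact hβ
      have hinj : Function.Injective (algebraMap B K) := IsFractionRing.injective B K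
      obtain ⟨b, hb⟩ := (h i).exists_algebraMap_eq hinj hint
      obtain ⟨⟨a, s⟩, hs⟩ := IsLocalization.surj (Submonoid.powers (f i)) b
      obtain ⟨m, hm⟩ := s.2
      refine ⟨m, a, ?_⟩
      have := congrArg (algebraMap B K) hs
      rw [map_mul] at this
      rw [hb, ← IsScalarTower.algebraMap_apply, ← IsScalarTower.algebraMap_apply, ← hm] at this
      rw [mul_comm]
      exact this
  -- get a root `α ∈ K`
  obtain ⟨α, hα⟩ := (setup i₀ hi₀).1
  -- the ideal of denominators of `α`
  set I : Ideal A :=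
    { carrier := {a : A | ∃ b : A, algebraMap A K a * α = algebraMap A K b}
      zero_mem' := ⟨0, by simp⟩
      add_mem' := by
        rintro a₁ a₂ ⟨b₁, hb₁⟩ ⟨b₂, hb₂⟩
        exact ⟨b₁ + b₂, by rw [map_add, map_add, add_mul, hb₁, hb₂]⟩
      smul_mem' := by
        rintro c a ⟨b, hb⟩
        exact ⟨c * b, by rw [smul_eq_mul, map_mul, map_mul, mul_assoc, hb]⟩ } with hI
  have hrad : ∀ i, f i ∈ I.radical := by
    intro i
    by_cases hi : f i = 0
    · exact ⟨1, by simpa [hi] using I.zero_mem⟩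
    · obtain ⟨m, a, ha⟩ := (setup i hi).2 α hα
      exact ⟨m, a, ha⟩
  have htop : I = ⊤ := by
    rw [← Ideal.radical_eq_top]
    rw [eq_top_iff, ← hf, Ideal.span_le]
    rintro _ ⟨i, rfl⟩
    exact hrad i
  have h1 : (1 : A) ∈ I := htop ▸ trivial
  obtain ⟨b, hb⟩ := h1
  rw [map_one, one_mul] at hb
  refine ⟨b, ?_⟩
  have : algebraMap A K (p.eval b) = 0 := by
    rw [← Polynomial.eval₂_hom, ← hb, hα]
  exact IsFractionRing.injective A K (by rw [this, map_zero])
end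

section
/- Let R be a quadratically closed ring and let p₁, p₂ ⊆ R be prime ideals (not necessarily distinct). Then either p₁ + p₂ = R, or p₁ + p₂ is a prime ideal. -/
/-- A ring `R` is *quadratically closed* if every monic quadratic polynomial over `R`
has a root in `R`. -/
def QuadraticallyClosed (R : Type*) [CommRing R] : Prop :=
  ∀ p : Polynomial R, p.Monic → p.natDegree = 2 → ∃ x : R, p.IsRoot x

/-- In a quadratically closed ring, the sum of two prime ideals is either the whole ring
or a prime ideal. -/
theorem sum_primes_eq_top_or_isPrime_of_quadraticallyClosed {R : Type*} [CommRing R]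
    (hR : QuadraticallyClosed R) (p₁ p₂ : Ideal R) (h₁ : p₁.IsPrime) (h₂ : p₂.IsPrime) :
    p₁ + p₂ = ⊤ ∨ (p₁ + p₂).IsPrime := by
  by_cases htop : p₁ + p₂ = ⊤
  · exact Or.inl htop
  right
  haveI : Nontrivial R := by
    by_contra h
    rw [not_nontrivial_iff_subsingleton] at h
    exact h₁.ne_top (Subsingleton.elim _ _)
  refine ⟨htop, ?_⟩
  intro a b hab
  rw [Ideal.add_eq_sup] at hab ⊢
  obtain ⟨u, hu, v, hv, huv⟩ := Submodule.mem_sup.mp hab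
  set f : Polynomial R := Polynomial.X ^ 2 + Polynomial.C (-(a + b)) * Polynomial.X
      + Polynomial.C u with hf
  have hmon : f.Monic := by
    rw [hf, add_assoc]
    exact Polynomial.monic_X_pow_add
      (lt_of_le_of_lt Polynomial.degree_linear_le (by norm_num))
  have hdeg : f.natDegree = 2 := by
    have hf' : f = Polynomial.C 1 * Polynomial.X ^ 2 + Polynomial.C (-(a + b)) * Polynomial.X
        + Polynomial.C u := by simp [hf]
    rw [hf', Polynomial.natDegree_quadratic one_ne_zero]
  obtain ⟨r, hr⟩ := hR f hmon hdeg
  have hroot : r ^ 2 + (-(a + b)) * r + u = 0 := by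
    simpa [hf, Polynomial.IsRoot] using hr
  have h1 : r * (r - (a + b)) ∈ p₁ := by
    have heq : r * (r - (a + b)) = -u := by linear_combination hroot
    rw [heq]; exact p₁.neg_mem hu
  have h2 : (r - a) * (r - b) ∈ p₂ := by
    have heq : (r - a) * (r - b) = v := by linear_combination hroot - huv
    rw [heq]; exact hv
  rcases h₁.mem_or_mem h1 with hr1 | hr1 <;> rcases h₂.mem_or_mem h2 with hr2 | hr2
  · left
    have : a = r + -(r - a) := by ring
    rw [this]
    exact Submodule.add_mem_sup hr1 (p₂.neg_mem hr2)
  · right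
    have : b = r + -(r - b) := by ring
    rw [this]
    exact Submodule.add_mem_sup hr1 (p₂.neg_mem hr2)
  · right
    have : b = -(r - (a + b)) + (r - a) := by ring
    rw [this]
    exact Submodule.add_mem_sup (p₁.neg_mem hr1) hr2
  · left
    have : a = -(r - (a + b)) + (r - b) := by ring
    rw [this]
    exact Submodule.add_mem_sup (p₁.neg_mem hr1) hr2
end

section
/- Let n be a positive natural number and let R be a 2n-adically closed ring. If p and q are prime ideals of R, then either p + q = R, or p + q is a prime ideal. -/
/-- A ring `R` is *`n`-adically closed* if every monic polynomial of degree `n` with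
coefficients in `R` has a root in `R`. -/
def AdicallyClosed (n : ℕ) (R : Type*) [CommRing R] : Prop :=
  ∀ p : Polynomial R, p.Monic → p.natDegree = n → ∃ x : R, p.IsRoot x

/-- In a `2n`-adically closed ring (`n ≥ 1`), the sum of two prime ideals is either the
whole ring or a prime ideal. -/
theorem sum_primes_eq_top_or_isPrime_of_adicallyClosed {R : Type*} [CommRing R] (n : ℕ)
    (hn : 0 < n) (hR : AdicallyClosed (2 * n) R) (p q : Ideal R) (hp : p.IsPrime)
    (hq : q.IsPrime) : p + q = ⊤ ∨ (p + q).IsPrime := by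
  rcases subsingleton_or_nontrivial R with hs | hs
  · exact absurd (Subsingleton.elim p ⊤) hp.ne_top
  by_cases htop : p + q = ⊤
  · exact Or.inl htop
  right
  constructor
  · exact htop
  intro x y hxy
  rw [Ideal.add_eq_sup, Submodule.mem_sup] at hxy
  obtain ⟨a, ha, b, hb, hab⟩ := hxy
  set g : Polynomial R :=
    Polynomial.C 1 * Polynomial.X ^ 2 + Polynomial.C (-(x + y)) * Polynomial.X + Polynomial.C b
    with hg
  have hgmonic : g.Monic := by
    unfold Polynomial.Monic
    rw [hg, Polynomial.leadingCoeff, Polynomial.natDegree_quadratic one_ne_zero]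
    simp [Polynomial.coeff_X, Polynomial.coeff_C]
  have hgdeg : g.natDegree = 2 := Polynomial.natDegree_quadratic one_ne_zero
  obtain ⟨r, hr⟩ := hR (g ^ n) (hgmonic.pow n) (by rw [hgmonic.natDegree_pow, hgdeg]; ring)
  have hre : Polynomial.eval r g = r ^ 2 - (x + y) * r + b := by
    simp [hg]; ring
  set e : R := r ^ 2 - (x + y) * r + b with he
  have hen : e ^ n = 0 := by
    have := hr
    rw [Polynomial.IsRoot, Polynomial.eval_pow, hre] at this
    exact this
  have hep : e ∈ p := hp.mem_of_pow_mem n (by rw [hen]; exact p.zero_mem)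
  have heq : e ∈ q := hq.mem_of_pow_mem n (by rw [hen]; exact q.zero_mem)
  have h1 : (r - x) * (r - y) ∈ p := by
    have : (r - x) * (r - y) = e + a := by
      rw [he]; linear_combination -hab
    rw [this]; exact p.add_mem hep ha
  have h2 : r * (r - (x + y)) ∈ q := by
    have : r * (r - (x + y)) = e - b := by rw [he]; ring
    rw [this]; exact q.sub_mem heq hb
  have hxm : ∀ u v : R, u - r ∈ p → r - v ∈ q → u - v ∈ p + q := fun u v hu hv =>
    (sub_add_sub_cancel u r v) ▸ Ideal.add_mem _ (Ideal.mem_sup_left hu) (Ideal.mem_sup_right hv)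
  rcases hp.mem_or_mem h1 with hpc | hpc <;> rcases hq.mem_or_mem h2 with hqc | hqc
  · -- r ≡ x mod p, r ≡ 0 mod q : x ∈ p+q
    left
    have : x = (x - r) + r := by ring
    rw [this]
    exact Ideal.add_mem _ (Ideal.mem_sup_left (by simpa using p.neg_mem hpc))
      (Ideal.mem_sup_right hqc)
  · -- r ≡ x mod p, r ≡ x+y mod q : y ∈ p+q
    right
    have : y = (r - x) + ((x + y) - r) := by ring
    rw [this]
    exact Ideal.add_mem _ (Ideal.mem_sup_left hpc)
      (Ideal.mem_sup_right (by simpa using q.neg_mem hqc))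
  · -- r ≡ y mod p, r ≡ 0 mod q : y ∈ p+q
    right
    have : y = (y - r) + r := by ring
    rw [this]
    exact Ideal.add_mem _ (Ideal.mem_sup_left (by simpa using p.neg_mem hpc))
      (Ideal.mem_sup_right hqc)
  · -- r ≡ y mod p, r ≡ x+y mod q : x ∈ p+q
    left
    have : x = (r - y) + ((x + y) - r) := by ring
    rw [this]
    exact Ideal.add_mem _ (Ideal.mem_sup_left hpc)
      (Ideal.mem_sup_right (by simpa using q.neg_mem hqc))
end

section
/- Let n > 1 and let R be an n-adically closed ring. Assume that for every prime ideal p ⊆ R and all a, b ∈ R with a ∉ p and b ∈ p, the polynomial T^n + a·T^{n−1} + b ∈ R[T] has a root α ∈ R with α ∉ p. Then for any two prime ideals P, Q of R, either P + Q = R or P + Q is a prime ideal. -/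
/-- Let `R` be an `n`-adically closed ring (`n > 1`) such that for every prime `p`, all
`a ∉ p` and `b ∈ p`, the polynomial `T ^ n + a * T ^ (n - 1) + b` has a root outside `p`.
Then the sum of two prime ideals of `R` is either the whole ring or a prime ideal. -/
theorem sum_primes_eq_top_or_isPrime_of_special_roots {R : Type*} [CommRing R] (n : ℕ)
    (hn : 1 < n) (hR : AdicallyClosed n R)
    (h : ∀ p : Ideal R, p.IsPrime → ∀ a b : R, a ∉ p → b ∈ p →
      ∃ α : R, α ∉ p ∧ α ^ n + a * α ^ (n - 1) + b = 0)
    (P Q : Ideal R) (hP : P.IsPrime) (hQ : Q.IsPrime) :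
    P + Q = ⊤ ∨ (P + Q).IsPrime := by
  classical
  obtain ⟨l, rfl⟩ : ∃ l, n = l + 2 := ⟨n - 2, by omega⟩
  rw [Submodule.add_eq_sup]
  by_cases htop : P ⊔ Q = ⊤
  · exact Or.inl htop
  right
  -- trivial case : P ≤ Q
  by_cases hPQ : P ≤ Q
  · rw [sup_eq_right.mpr hPQ]; exact hQ
  obtain ⟨p₀, hp₀P, hp₀Q⟩ := SetLike.not_le_iff_exists.mp hPQ
  haveI : Nontrivial R := by
    rcases subsingleton_or_nontrivial R with hs | hn'
    · exfalso
      apply hP.ne_top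
      rw [Ideal.eq_top_iff_one]
      have : (1 : R) = 0 := Subsingleton.elim _ _
      rw [this]; exact P.zero_mem
    · exact hn'
  -- Lemma A : every element has an (l+2)-th root
  have rootA : ∀ c : R, ∃ ρ : R, ρ ^ (l + 2) = c := by
    intro c
    have hmonic : (Polynomial.X ^ (l + 2) - Polynomial.C c).Monic :=
      Polynomial.monic_X_pow_sub_C c (by omega)
    have hdeg : (Polynomial.X ^ (l + 2) - Polynomial.C c).natDegree = l + 2 :=
      Polynomial.natDegree_X_pow_sub_C
    obtain ⟨ρ, hρ⟩ := hR _ hmonic hdeg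
    refine ⟨ρ, ?_⟩
    have := hρ
    simp only [Polynomial.IsRoot, Polynomial.eval_sub, Polynomial.eval_pow,
      Polynomial.eval_X, Polynomial.eval_C, sub_eq_zero] at this
    exact this
  -- Lemma B : for any a and c ∈ Q, there is e ∈ Q with (a - e)^(l+1) * e ≡ c mod P
  have lemB : ∀ (a : R), ∀ c ∈ Q, ∃ e ∈ Q, (a - e) ^ (l + 1) * e - c ∈ P := by
    intro a c hc
    set a' := if a ∈ Q then a + p₀ else a with ha'def
    have ha'Q : a' ∉ Q := by
      by_cases hA : a ∈ Q
      · simp only [ha'def, if_pos hA]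
        intro hmem
        exact hp₀Q (by simpa using Q.sub_mem hmem hA)
      · simpa only [ha'def, if_neg hA] using hA
    have haa' : a - a' ∈ P := by
      by_cases hA : a ∈ Q
      · simp only [ha'def, if_pos hA]
        have : a - (a + p₀) = -p₀ := by ring
        rw [this]; exact P.neg_mem hp₀P
      · simp only [ha'def, if_neg hA, sub_self]
        exact P.zero_mem
    have hb : (-1 : R) ^ (l + 2) * c ∈ Q := Q.mul_mem_left _ hc
    obtain ⟨α, hαQ, heq⟩ := h Q hQ a' ((-1) ^ (l + 2) * c) ha'Q hb
    have hn1 : l + 2 - 1 = l + 1 := rfl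
    rw [hn1] at heq
    -- key evaluation
    have hkey : α ^ (l + 1) * (α + a') = -((-1 : R) ^ (l + 2) * c) := by
      linear_combination heq
    have heQ' : α ^ (l + 1) * (α + a') ∈ Q := by
      rw [hkey]; exact Q.neg_mem hb
    have heQ : α + a' ∈ Q := by
      rcases hQ.mem_or_mem heQ' with hA | hA
      · exact absurd (hQ.mem_of_pow_mem _ hA) hαQ
      · exact hA
    set e := α + a' with hedef
    refine ⟨e, heQ, ?_⟩
    -- the exact value at a' :
    have hval : (a' - e) ^ (l + 1) * e = c := by
      have h1 : a' - e = -α := by rw [hedef]; ring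
      rw [h1, neg_pow, mul_assoc, hkey]
      have h3 : (-1 : R) ^ (l + 1) * (-1 : R) ^ (l + 1) = 1 := by
        rw [← pow_add]
        exact Even.neg_one_pow ⟨l + 1, by ring⟩
      have h2 : (-1 : R) ^ (l + 2) = (-1 : R) ^ (l + 1) * (-1) := by
        rw [pow_succ]
      rw [h2]
      linear_combination c * h3
    obtain ⟨t, ht⟩ := sub_dvd_pow_sub_pow (a - e) (a' - e) (l + 1)
    have hfinal : (a - e) ^ (l + 1) * e - c = (a - a') * (t * e) := by
      linear_combination e * ht + hval
    rw [hfinal]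
    exact Ideal.mul_mem_right _ _ haa'
  -- Lemma C : the descent rule
  have lemC : ∀ g y : R, g ^ (l + 1) * y ∈ P ⊔ Q → y ∈ P ⊔ Q ∨ g ^ (l + 1) ∈ P ⊔ Q := by
    intro g y hgy
    obtain ⟨u, hu, v, hv, huv⟩ := Submodule.mem_sup.mp hgy
    set a := g + y with hadef
    obtain ⟨e, he, heP⟩ := lemB a v hv
    have hgP : (a - y) ^ (l + 1) * y - v ∈ P := by
      have hay : a - y = g := by rw [hadef]; ring
      have h5 : (a - y) ^ (l + 1) * y - v = u := by
        rw [hay]; linear_combination -huv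
      rw [h5]; exact hu
    have hsub : (a - e) ^ (l + 1) * e - (a - y) ^ (l + 1) * y ∈ P := by
      have := P.sub_mem heP hgP
      simpa [sub_sub_sub_cancel_right] using this
    obtain ⟨t, ht⟩ := sub_dvd_pow_sub_pow (a - e) (a - y) (l + 1)
    have key : (e - y) * ((a - y) ^ (l + 1) - t * e) ∈ P := by
      have hid : (e - y) * ((a - y) ^ (l + 1) - t * e) =
          (a - e) ^ (l + 1) * e - (a - y) ^ (l + 1) * y := by
        linear_combination (-e) * ht
      rwa [hid]
    rcases hP.mem_or_mem key with h1 | h1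
    · left
      have hy' : y = e - (e - y) := by ring
      rw [hy']
      exact Submodule.sub_mem _ (Submodule.mem_sup_right he) (Submodule.mem_sup_left h1)
    · right
      have hay : a - y = g := by rw [hadef]; ring
      have e1 : g ^ (l + 1) = ((a - y) ^ (l + 1) - t * e) + t * e := by
        rw [hay]; ring
      rw [e1]
      exact Submodule.add_mem _ (Submodule.mem_sup_left h1)
        (Submodule.mem_sup_right (Q.mul_mem_left t he))
  -- Lemma D : power descent
  have lemD : ∀ k : ℕ, ∀ ξ : R, ξ ^ ((k + 1) * (l + 1)) ∈ P ⊔ Q → ξ ^ (l + 1) ∈ P ⊔ Q := by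
    intro k
    induction k with
    | zero => intro ξ hmem; simpa using hmem
    | succ k ih =>
      intro ξ hmem
      have hid : ξ ^ ((k + 1 + 1) * (l + 1)) = (ξ ^ (k + 1)) ^ (l + 1) * ξ ^ (l + 1) := by
        rw [← pow_mul, ← pow_add]
        congr 1
        ring
      rcases lemC (ξ ^ (k + 1)) (ξ ^ (l + 1)) (by rw [← hid]; exact hmem) with h' | h'
      · exact h'
      · exact ih ξ (by rwa [← pow_mul] at h')
  -- Main argument
  refine Ideal.isPrime_iff.mpr ⟨htop, ?_⟩
  intro x y hxy
  by_contra hcon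
  push_neg at hcon
  obtain ⟨hx, hy⟩ := hcon
  obtain ⟨ξ, hξ⟩ := rootA x
  have h1 : (ξ * x) ^ (l + 1) * y ∈ P ⊔ Q := by
    have hid : (ξ * x) ^ (l + 1) * y = (ξ ^ (l + 1) * x ^ l) * (x * y) := by
      rw [mul_pow]; ring
    rw [hid]
    exact Ideal.mul_mem_left _ _ hxy
  rcases lemC (ξ * x) y h1 with h2 | h2
  · exact hy h2
  have hid2 : (ξ * x) ^ (l + 1) = ξ ^ ((l + 3) * (l + 1)) := by
    rw [mul_pow, ← hξ, ← pow_mul, ← pow_add]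
    congr 1
    ring
  rw [hid2] at h2
  have h4 : ξ ^ (l + 1) ∈ P ⊔ Q := lemD (l + 2) ξ h2
  apply hx
  have hxmem : x = ξ ^ (l + 1) * ξ := by rw [← hξ, pow_succ]
  rw [hxmem]
  exact Ideal.mul_mem_right _ _ h4
end

section
/- Let R be a ring and n > 1 a natural number. Assume that for every prime ideal p ⊆ R and all a, b ∈ R with a ∉ p and b ∈ p, the polynomial T^n + a·T^{n−1} + b ∈ R[T] has a root α ∈ R with α ∉ p. Then for any two prime ideals P, Q of R with P + Q ≠ R, the ideal P + Q is a primary ideal. -/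
/-- Polynomial identity: `(u^(m+2) - t*u^(m+1)) - (v^(m+2) - t*v^(m+1))` is divisible by
`u - v`, with an explicit cofactor `G` satisfying `G = u^(m+1) + (v - t) * H`. -/
private lemma key_ident {R : Type*} [CommRing R] (m : ℕ) (t u v : R) :
    ∃ G H : R, (u - v) * G =
      (u ^ (m + 2) - t * u ^ (m + 1)) - (v ^ (m + 2) - t * v ^ (m + 1)) ∧
      G = u ^ (m + 1) + (v - t) * H := by
  induction m with
  | zero => exact ⟨u + v - t, 1, by ring, by ring⟩
  | succ k ih =>
      obtain ⟨G, H, h1, h2⟩ := ih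
      refine ⟨(u ^ (k + 2) - t * u ^ (k + 1)) + v * G, u ^ (k + 1) + v * H, ?_, ?_⟩
      · linear_combination v * h1
      · linear_combination v * h2

private lemma aux {R : Type*} [CommRing R] {n : ℕ} (hn : 1 < n)
    {P Q : Ideal R} (hP : P.IsPrime) (hQ : Q.IsPrime)
    (hroot : ∀ a b : R, a ∉ Q → b ∈ Q → ∃ α : R, α ∉ Q ∧ α ^ n + a * α ^ (n - 1) + b = 0)
    {x y p q : R} (hp : p ∈ P) (hq : q ∈ Q) (hxy : x * y = p + q)
    (hxyQ : x + y ∉ Q) :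
    x ∈ P ⊔ Q ∨ y ^ (n - 1) ∈ P ⊔ Q := by
  obtain ⟨m, rfl⟩ : ∃ m, n = m + 2 := ⟨n - 2, by omega⟩
  have hsub : m + 2 - 1 = m + 1 := rfl
  rw [hsub]
  obtain ⟨α, hαQ, hα⟩ := hroot (-(x + y)) (y ^ m * q)
    (fun hc => hxyQ (by simpa using Q.neg_mem hc)) (Q.mul_mem_left _ hq)
  rw [hsub] at hα
  -- `α - (x + y) ∈ Q`
  have hiq : α - (x + y) ∈ Q := by
    have hmem : α ^ (m + 1) * (α - (x + y)) ∈ Q := by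
      have he : α ^ (m + 1) * (α - (x + y)) = -(y ^ m * q) := by linear_combination hα
      rw [he]; exact Q.neg_mem (Q.mul_mem_left _ hq)
    rcases hQ.mem_or_mem hmem with hmem | hmem
    · exact absurd (hQ.mem_of_pow_mem _ hmem) hαQ
    · exact hmem
  obtain ⟨G, H, h1, h2⟩ := key_ident m (x + y) y α
  have hYG : (y - α) * G ∈ P := by
    have he : (y - α) * G = -(y ^ m * p) := by
      linear_combination h1 - hα - y ^ m * hxy
    rw [he]; exact P.neg_mem (P.mul_mem_left _ hp)
  rcases hP.mem_or_mem hYG with hmem | hmem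
  · left
    have hx : x = -(y - α) - (α - (x + y)) := by ring
    rw [hx]
    exact sub_mem (Ideal.mem_sup_left (P.neg_mem hmem)) (Ideal.mem_sup_right hiq)
  · right
    have hy : y ^ (m + 1) = G - (α - (x + y)) * H := by rw [h2]; ring
    rw [hy]
    exact sub_mem (Ideal.mem_sup_left hmem) (Ideal.mem_sup_right (Q.mul_mem_right _ hiq))

/-- Let `R` be a ring and `n > 1` a natural number such that for every prime `p`, all
`a ∉ p` and `b ∈ p`, the polynomial `T ^ n + a * T ^ (n - 1) + b` has a root outside `p`.
Then for any prime ideals `P, Q` with `P + Q ≠ R`, the ideal `P + Q` is primary. -/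
theorem sum_primes_isPrimary_of_special_roots {R : Type*} [CommRing R] (n : ℕ)
    (hn : 1 < n)
    (h : ∀ p : Ideal R, p.IsPrime → ∀ a b : R, a ∉ p → b ∈ p →
      ∃ α : R, α ∉ p ∧ α ^ n + a * α ^ (n - 1) + b = 0)
    (P Q : Ideal R) (hP : P.IsPrime) (hQ : Q.IsPrime) (hPQ : P + Q ≠ ⊤) :
    (P + Q).IsPrimary := by
  rw [Ideal.isPrimary_iff]
  refine ⟨hPQ, fun {x y} hxy => ?_⟩
  rw [Submodule.add_eq_sup] at hxy ⊢
  obtain ⟨p, hp, q, hq, hpq⟩ := Submodule.mem_sup.mp hxy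
  by_cases hA : x + y ∈ Q
  · by_cases hB : x + y ∈ P
    · -- x + y ∈ P ∩ Q, so y ^ 2 = y * (x + y) - x * y ∈ P ⊔ Q
      right
      refine Ideal.mem_radical_iff.mpr ⟨2, ?_⟩
      have hy2 : y ^ 2 = y * (x + y) - x * y := by ring
      rw [hy2]
      exact sub_mem (Ideal.mul_mem_left _ _ (Ideal.mem_sup_left hB)) hxy
    · -- x + y ∉ P : apply aux with roles of P and Q swapped
      rcases aux hn hQ hP (h P hP) hq hp (by linear_combination -hpq) hB with hx | hy
      · exact Or.inl (by rwa [sup_comm] at hx)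
      · exact Or.inr (Ideal.mem_radical_iff.mpr ⟨n - 1, by rwa [sup_comm] at hy⟩)
  · rcases aux hn hP hQ (h Q hQ) hp hq hpq.symm hA with hx | hy
    · exact Or.inl hx
    · exact Or.inr (Ideal.mem_radical_iff.mpr ⟨n - 1, hy⟩)
end

section
/- Let R be an n-adically closed reduced ring. Then for every natural number m ≥ 1 dividing n, R is m-adically closed. -/
/-- A reduced `n`-adically closed ring is `m`-adically closed for every `m ≥ 1`
dividing `n`. -/
theorem adicallyClosed_of_dvd {R : Type*} [CommRing R] [IsReduced R] {n m : ℕ}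
    (hR : AdicallyClosed n R) (hm : 1 ≤ m) (hmn : m ∣ n) : AdicallyClosed m R := by
  rcases eq_or_ne n 0 with rfl | hn
  · -- R is trivial
    obtain ⟨x, hx⟩ := hR 1 Polynomial.monic_one Polynomial.natDegree_one
    simp only [Polynomial.IsRoot, Polynomial.eval_one] at hx
    intro p _ _
    have := subsingleton_of_zero_eq_one hx.symm
    exact ⟨x, Subsingleton.elim _ _⟩
  · obtain ⟨k, rfl⟩ := hmn
    have hk : k ≠ 0 := by rintro rfl; simp at hn
    intro p hp hdeg
    obtain ⟨x, hx⟩ := hR (p ^ k) (hp.pow k) (by rw [hp.natDegree_pow, hdeg, Nat.mul_comm])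
    refine ⟨x, ?_⟩
    have : (Polynomial.eval x p) ^ k = 0 := by
      simpa [Polynomial.IsRoot, Polynomial.eval_pow] using hx
    exact IsReduced.eq_zero _ ⟨k, this⟩
end

section
/- Let n ≥ 1 and let R be a 2n-adically closed ring whose spectrum Spec(R) is irreducible (equivalently, the nilradical of R is a prime ideal). Let p₁, …, p_k be prime ideals of R. Then there is a unique prime ideal P of R which is maximal (with respect to inclusion) among all prime ideals contained in p₁ ∩ ⋯ ∩ p_k. -/
/-- In a `2n`-adically closed ring every monic quadratic has a root (substitute `X^n`). -/
theorem AdicallyClosed.quad {R : Type*} [CommRing R] [Nontrivial R] {n : ℕ} (hn : 1 ≤ n)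
    (hR : AdicallyClosed (2 * n) R) (s t : R) : ∃ e : R, e ^ 2 + s * e + t = 0 := by
  have hdeg : (Polynomial.C s * Polynomial.X ^ n + Polynomial.C t).degree
      < ((2 * n : ℕ) : WithBot ℕ) := by
    have h1 : (Polynomial.C s * Polynomial.X ^ n).degree ≤ ((n : ℕ) : WithBot ℕ) := by
      apply le_trans (Polynomial.degree_mul_le _ _)
      simpa using add_le_add Polynomial.degree_C_le (le_of_eq (Polynomial.degree_X_pow (R := R) n))
    have h2 : (Polynomial.C t).degree ≤ ((0 : ℕ) : WithBot ℕ) := Polynomial.degree_C_le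
    have hlt : ((n : ℕ) : WithBot ℕ) < ((2 * n : ℕ) : WithBot ℕ) := by
      exact_mod_cast (by omega : n < 2 * n)
    have hlt0 : ((0 : ℕ) : WithBot ℕ) < ((2 * n : ℕ) : WithBot ℕ) := by
      exact_mod_cast (by omega : 0 < 2 * n)
    exact lt_of_le_of_lt (Polynomial.degree_add_le _ _)
      (max_lt (lt_of_le_of_lt h1 hlt) (lt_of_le_of_lt h2 hlt0))
  have hmon : (Polynomial.X ^ (2 * n) +
      (Polynomial.C s * Polynomial.X ^ n + Polynomial.C t)).Monic :=
    Polynomial.monic_X_pow_add hdeg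
  have hnd : (Polynomial.X ^ (2 * n) +
      (Polynomial.C s * Polynomial.X ^ n + Polynomial.C t)).natDegree = 2 * n := by
    rw [Polynomial.natDegree_add_eq_left_of_degree_lt, Polynomial.natDegree_X_pow]
    rwa [Polynomial.degree_X_pow]
  obtain ⟨x, hx⟩ := hR _ hmon hnd
  have hx' : x ^ (2 * n) + (s * x ^ n + t) = 0 := by
    simpa [Polynomial.IsRoot] using hx
  refine ⟨x ^ n, ?_⟩
  have hpow : (x ^ n) ^ 2 = x ^ (2 * n) := by rw [← pow_mul, mul_comm]
  rw [hpow]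
  linear_combination hx'

/-- In a ring where every monic quadratic has a root, the sum of two prime ideals is
prime provided it is proper. -/
theorem sup_isPrime_of_quad {R : Type*} [CommRing R]
    (quad : ∀ s t : R, ∃ e : R, e ^ 2 + s * e + t = 0)
    {P Q : Ideal R} (hP : P.IsPrime) (hQ : Q.IsPrime) (hne : P ⊔ Q ≠ ⊤) :
    (P ⊔ Q).IsPrime := by
  refine ⟨hne, ?_⟩
  intro f g hfg
  obtain ⟨a, ha, b, hb, hab⟩ := Submodule.mem_sup.mp hfg
  obtain ⟨e, he⟩ := quad (-(f + g)) a
  have hA : e * (f + g - e) = a := by linear_combination -he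
  have hB : (e - f) * (e - g) = b := by linear_combination he - hab
  have h1 : e ∈ P ∨ f + g - e ∈ P := hP.mem_or_mem (hA ▸ ha)
  have h2 : e - f ∈ Q ∨ e - g ∈ Q := hQ.mem_or_mem (hB ▸ hb)
  have mP : P ≤ P ⊔ Q := le_sup_left
  have mQ : Q ≤ P ⊔ Q := le_sup_right
  rcases h1 with h1 | h1 <;> rcases h2 with h2 | h2
  · left
    have := Submodule.sub_mem _ (mP h1) (mQ h2)
    rwa [show e - (e - f) = f by ring] at this
  · right
    have := Submodule.sub_mem _ (mP h1) (mQ h2)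
    rwa [show e - (e - g) = g by ring] at this
  · right
    have := Submodule.add_mem _ (mP h1) (mQ h2)
    rwa [show f + g - e + (e - f) = g by ring] at this
  · left
    have := Submodule.add_mem _ (mP h1) (mQ h2)
    rwa [show f + g - e + (e - g) = f by ring] at this

/-- Let `R` be a `2n`-adically closed ring (`n ≥ 1`) whose spectrum is irreducible, i.e.
whose nilradical is prime. Given finitely many (at least one) prime ideals `p i` of `R`,
there is a unique prime ideal which is maximal among the prime ideals contained in
`⋂ i, p i`. -/
theorem existsUnique_maximal_prime_le_iInf {R : Type*} [CommRing R] (n : ℕ) (hn : 1 ≤ n)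
    (hR : AdicallyClosed (2 * n) R) (hirr : (nilradical R).IsPrime)
    {ι : Type*} [Finite ι] [Nonempty ι] (p : ι → Ideal R) (hp : ∀ i, (p i).IsPrime) :
    ∃! P : Ideal R, Maximal (fun q : Ideal R => q.IsPrime ∧ q ≤ ⨅ i, p i) P := by
  classical
  have : Nontrivial R := by
    rcases subsingleton_or_nontrivial R with h | h
    · exact absurd (Subsingleton.elim (nilradical R) ⊤) hirr.ne_top
    · exact h
  have quad := hR.quad hn
  obtain ⟨i0⟩ := ‹Nonempty ι›
  set I : Ideal R := ⨅ i, p i with hIdef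
  have hIle : I ≤ p i0 := iInf_le p i0
  have hIne : I ≠ ⊤ := fun h => (hp i0).ne_top (top_le_iff.mp (h ▸ hIle))
  have hnil : nilradical R ≤ I := le_iInf fun i => nilradical_le_prime (p i)
  -- Zorn's lemma to get a maximal element
  obtain ⟨M, -, hM⟩ := zorn_le_nonempty₀ {q : Ideal R | q.IsPrime ∧ q ≤ I}
    (fun c hcS hchain y hy => by
      refine ⟨sSup c, ⟨?_, sSup_le fun z hz => (hcS hz).2⟩, fun z hz => le_sSup hz⟩
      have hsle : sSup c ≤ I := sSup_le fun z hz => (hcS hz).2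
      refine ⟨fun h => hIne (top_le_iff.mp (h ▸ hsle)), ?_⟩
      intro x y' hxy
      rw [Submodule.mem_sSup_of_directed ⟨y, hy⟩ hchain.directedOn] at hxy
      obtain ⟨q, hqc, hq⟩ := hxy
      rcases (hcS hqc).1.mem_or_mem hq with h | h
      · exact Or.inl (le_sSup hqc h)
      · exact Or.inr (le_sSup hqc h))
    (nilradical R) ⟨hirr, hnil⟩
  refine ⟨M, hM, fun Q hQ => ?_⟩
  -- uniqueness: the sum of two maximal such primes is again in the set
  have hsle : Q ⊔ M ≤ I := sup_le hQ.prop.2 hM.prop.2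
  have hsne : Q ⊔ M ≠ ⊤ := fun h => hIne (top_le_iff.mp (h ▸ hsle))
  have hsum : (Q ⊔ M).IsPrime := sup_isPrime_of_quad quad hQ.prop.1 hM.prop.1 hsne
  have h1 : Q ⊔ M ≤ Q := hQ.2 ⟨hsum, hsle⟩ le_sup_left
  have h2 : Q ⊔ M ≤ M := hM.2 ⟨hsum, hsle⟩ le_sup_right
  exact le_antisymm (le_sup_left.trans h2) (le_sup_right.trans h1)
end

section
/- Let n ≥ 1, let A be a 2n-adically closed integral domain, and let p, q be prime ideals of A. Let ST denote the multiplicative subset {st : s ∈ A − p, t ∈ A − q} of A. Then the localization (ST)^{-1}A is a local ring. (Equivalently, the join [A_p, A_q] of the subrings A_p and A_q inside Frac(A) is a local ring.) -/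
/-- The multiplicative set `ST = {s * t : s ∈ A - p, t ∈ A - q}` associated to two prime
ideals `p, q` of `A`. -/
def primeComplMul {A : Type*} [CommRing A] (p q : Ideal A) [hp : p.IsPrime]
    [hq : q.IsPrime] : Submonoid A where
  carrier := {x | ∃ s ∉ p, ∃ t ∉ q, x = s * t}
  one_mem' := ⟨1, (fun h => hp.ne_top (Ideal.eq_top_iff_one p |>.mpr h)), 1, (fun h => hq.ne_top (Ideal.eq_top_iff_one q |>.mpr h)), (one_mul 1).symm⟩
  mul_mem' := by
    rintro x y ⟨s₁, hs₁, t₁, ht₁, rfl⟩ ⟨s₂, hs₂, t₂, ht₂, rfl⟩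
    refine ⟨s₁ * s₂, fun hs => ?_, t₁ * t₂, fun ht => ?_, by ring⟩
    · rcases hp.mem_or_mem hs with h | h
      exacts [hs₁ h, hs₂ h]
    · rcases hq.mem_or_mem ht with h | h
      exacts [ht₁ h, ht₂ h]

/-- Let `A` be a `2n`-adically closed domain (`n ≥ 1`) and `p, q` prime ideals of `A`.
Then the localization of `A` at the multiplicative set `{s * t : s ∉ p, t ∉ q}` is a local
ring; equivalently, the join `[A_p, A_q]` inside `Frac A` is a local ring. -/
theorem isLocalRing_localization_primeComplMul {A : Type*} [CommRing A] [IsDomain A]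
    (n : ℕ) (hn : 1 ≤ n) (hA : AdicallyClosed (2 * n) A) (p q : Ideal A) [p.IsPrime]
    [q.IsPrime] : IsLocalRing (Localization (primeComplMul p q)) := by
  set S := primeComplMul p q with hSdef
  -- every monic quadratic has a root
  have hquad : ∀ u v : A, ∃ x : A, x ^ 2 + u * x + v = 0 := by
    intro u v
    have hlt : (Polynomial.C u * Polynomial.X ^ n + Polynomial.C v).degree
        < (Polynomial.X ^ (2 * n) : Polynomial A).degree := by
      rw [Polynomial.degree_X_pow]
      refine lt_of_le_of_lt (Polynomial.degree_add_le _ _) (max_lt ?_ ?_)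
      · refine lt_of_le_of_lt (Polynomial.degree_C_mul_X_pow_le n u) ?_
        exact_mod_cast (by omega : n < 2 * n)
      · refine lt_of_le_of_lt Polynomial.degree_C_le ?_
        exact_mod_cast (by omega : 0 < 2 * n)
    have hmon : (Polynomial.X ^ (2 * n)
        + (Polynomial.C u * Polynomial.X ^ n + Polynomial.C v)).Monic :=
      (Polynomial.monic_X_pow _).add_of_left hlt
    have hdeg : (Polynomial.X ^ (2 * n)
        + (Polynomial.C u * Polynomial.X ^ n + Polynomial.C v)).natDegree = 2 * n := by
      rw [Polynomial.natDegree_eq_of_degree_eq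
        (Polynomial.degree_add_eq_left_of_degree_lt hlt), Polynomial.natDegree_X_pow]
    obtain ⟨x, hx⟩ := hA _ hmon hdeg
    have hx' : x ^ (2 * n) + (u * x ^ n + v) = 0 := by
      simpa [Polynomial.IsRoot] using hx
    refine ⟨x ^ n, ?_⟩
    have h2 : (x ^ n) ^ 2 = x ^ (2 * n) := by rw [← pow_mul, mul_comm]
    rw [h2]; linear_combination hx'
  have h1p : (1 : A) ∉ p := fun h =>
    (inferInstance : p.IsPrime).ne_top ((Ideal.eq_top_iff_one p).mpr h)
  have h1q : (1 : A) ∉ q := fun h =>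
    (inferInstance : q.IsPrime).ne_top ((Ideal.eq_top_iff_one q).mpr h)
  -- the key lemma
  have key : ∀ (a s t : A), s ∉ p → t ∉ q →
      ¬ IsUnit (algebraMap A (Localization S) a) →
      ¬ IsUnit (algebraMap A (Localization S) (s * t - a)) → False := by
    intro a s t hs ht ha hb
    obtain ⟨M₁, hM₁, haM₁⟩ := exists_max_ideal_of_mem_nonunits (mem_nonunits_iff.mpr ha)
    obtain ⟨M₂, hM₂, hbM₂⟩ := exists_max_ideal_of_mem_nonunits (mem_nonunits_iff.mpr hb)
    haveI := hM₁.isPrime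
    haveI := hM₂.isPrime
    set P := M₁.comap (algebraMap A (Localization S)) with hPdef
    set Q := M₂.comap (algebraMap A (Localization S)) with hQdef
    have hPprime : P.IsPrime := Ideal.IsPrime.comap _
    have hQprime : Q.IsPrime := Ideal.IsPrime.comap _
    have hdisjP : ∀ z : A, z ∈ S → z ∉ P := by
      intro z hz hzP
      have hu : IsUnit (algebraMap A (Localization S) z) :=
        IsLocalization.map_units _ (⟨z, hz⟩ : S)
      exact hM₁.ne_top (M₁.eq_top_of_isUnit_mem hzP hu)
    have hdisjQ : ∀ z : A, z ∈ S → z ∉ Q := by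
      intro z hz hzQ
      have hu : IsUnit (algebraMap A (Localization S) z) :=
        IsLocalization.map_units _ (⟨z, hz⟩ : S)
      exact hM₂.ne_top (M₂.eq_top_of_isUnit_mem hzQ hu)
    have hPp : ∀ z, z ∈ P → z ∈ p := by
      intro z hzP
      by_contra hzp
      exact hdisjP z ⟨z, hzp, 1, h1q, (mul_one z).symm⟩ hzP
    have hPq : ∀ z, z ∈ P → z ∈ q := by
      intro z hzP
      by_contra hzq
      exact hdisjP z ⟨1, h1p, z, hzq, (one_mul z).symm⟩ hzP
    have hQp : ∀ z, z ∈ Q → z ∈ p := by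
      intro z hzQ
      by_contra hzp
      exact hdisjQ z ⟨z, hzp, 1, h1q, (mul_one z).symm⟩ hzQ
    have hQq : ∀ z, z ∈ Q → z ∈ q := by
      intro z hzQ
      by_contra hzq
      exact hdisjQ z ⟨1, h1p, z, hzq, (one_mul z).symm⟩ hzQ
    have haP : a ∈ P := haM₁
    have hbQ : s * t - a ∈ Q := hbM₂
    obtain ⟨φ, hφ⟩ := hquad (s + t) a
    have hm1 : φ * (φ + (s + t)) ∈ P := by
      have hfac : φ * (φ + (s + t)) = -a := by linear_combination hφ
      rw [hfac]; exact P.neg_mem haP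
    have hm2 : (φ + t) * (φ + s) ∈ Q := by
      have hfac : (φ + t) * (φ + s) = s * t - a := by linear_combination hφ
      rw [hfac]; exact hbQ
    rcases hPprime.mem_or_mem hm1 with h1 | h1 <;> rcases hQprime.mem_or_mem hm2 with h2 | h2
    · refine ht ?_
      have := q.sub_mem (hQq _ h2) (hPq _ h1)
      simpa using this
    · refine hs ?_
      have := p.sub_mem (hQp _ h2) (hPp _ h1)
      simpa using this
    · refine hs ?_
      have := p.sub_mem (hPp _ h1) (hQp _ h2)
      have heq : φ + (s + t) - (φ + t) = s := by ring
      rwa [heq] at this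
    · refine ht ?_
      have := q.sub_mem (hPq _ h1) (hQq _ h2)
      have heq : φ + (s + t) - (φ + s) = t := by ring
      rwa [heq] at this
  -- nontriviality
  have hinj : Function.Injective (algebraMap A (Localization S)) := by
    refine IsLocalization.injective (M := S) (Localization S) ?_
    rintro z ⟨s, hs, t, ht, rfl⟩
    have hs0 : s ≠ 0 := fun h => hs (h ▸ p.zero_mem)
    have ht0 : t ≠ 0 := fun h => ht (h ▸ q.zero_mem)
    exact mem_nonZeroDivisors_of_ne_zero (mul_ne_zero hs0 ht0)
  haveI : Nontrivial (Localization S) := by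
    refine ⟨0, 1, fun h => ?_⟩
    have : (0 : A) = 1 := hinj (by simpa using h)
    exact zero_ne_one this
  apply IsLocalRing.of_isUnit_or_isUnit_one_sub_self
  intro x
  obtain ⟨⟨a, m⟩, hx⟩ := IsLocalization.surj (M := S) x
  obtain ⟨s, hs, t, ht, hm⟩ := m.2
  by_cases ha : IsUnit (algebraMap A (Localization S) a)
  · left
    have : IsUnit (x * algebraMap A (Localization S) (m : A)) := by rw [hx]; exact ha
    exact isUnit_of_mul_isUnit_left this
  · right
    by_cases hb : IsUnit (algebraMap A (Localization S) (s * t - a))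
    · have hx2 : (1 - x) * algebraMap A (Localization S) (m : A)
          = algebraMap A (Localization S) ((m : A) - a) := by
        rw [sub_mul, one_mul, hx, map_sub]
      have hb' : IsUnit (algebraMap A (Localization S) ((m : A) - a)) := by
        rw [hm]; exact hb
      have : IsUnit ((1 - x) * algebraMap A (Localization S) (m : A)) := by
        rw [hx2]; exact hb'
      exact isUnit_of_mul_isUnit_left this
    · exact absurd (key a s t hs ht ha hb) id
end

section
/- Let R be a ring. The following are equivalent: (a) R satisfies the irreducible intersection property; (b) for every proper ideal I ⊊ R, if the set Σ = {p ∈ Spec(R) : p ⊆ I} is nonempty, then Σ has a unique maximal element with respect to inclusion; (c) for any two distinct prime ideals p₁, p₂ of R with p₁ + p₂ ≠ R, the set {p ∈ Spec(R) : p ⊆ p₁ + p₂} has a unique maximal element with respect to inclusion. -/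
/-- A ring `R` satisfies the *irreducible intersection property* if for any two prime
ideals `p₁, p₂` of `R`, either `p₁ + p₂ = R` or `p₁ + p₂` is a prime ideal. -/
def IrreducibleIntersectionProperty (R : Type*) [CommRing R] : Prop :=
  ∀ p₁ p₂ : Ideal R, p₁.IsPrime → p₂.IsPrime → p₁ + p₂ = ⊤ ∨ (p₁ + p₂).IsPrime

private lemma sSup_chain_isPrime {R : Type*} [CommRing R] {c : Set (Ideal R)}
    (hne : c.Nonempty) (hc : IsChain (· ≤ ·) c) (hp : ∀ p ∈ c, p.IsPrime) :
    (sSup c).IsPrime := by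
  have hdir : DirectedOn (· ≤ ·) c := hc.directedOn
  constructor
  · intro h
    have : (1 : R) ∈ sSup c := h ▸ Submodule.mem_top
    obtain ⟨p, hpc, hp1⟩ := (Submodule.mem_sSup_of_directed hne hdir).1 this
    exact (hp p hpc).ne_top (Ideal.eq_top_iff_one p |>.2 hp1)
  · intro x y hxy
    obtain ⟨p, hpc, hxyp⟩ := (Submodule.mem_sSup_of_directed hne hdir).1 hxy
    rcases (hp p hpc).mem_or_mem hxyp with h | h
    · exact Or.inl ((Submodule.mem_sSup_of_directed hne hdir).2 ⟨p, hpc, h⟩)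
    · exact Or.inr ((Submodule.mem_sSup_of_directed hne hdir).2 ⟨p, hpc, h⟩)

private lemma exists_maximal_prime_le {R : Type*} [CommRing R] {I q : Ideal R}
    (hq : q.IsPrime) (hqI : q ≤ I) :
    ∃ P, q ≤ P ∧ Maximal (fun p : Ideal R => p.IsPrime ∧ p ≤ I) P := by
  obtain ⟨P, hqP, hP⟩ := zorn_le_nonempty₀ {p : Ideal R | p.IsPrime ∧ p ≤ I}
    (fun c hcs hc y hy => by
      refine ⟨sSup c, ⟨sSup_chain_isPrime ⟨y, hy⟩ hc (fun p hp => (hcs hp).1),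
        sSup_le (fun p hp => (hcs hp).2)⟩, fun z hz => le_sSup hz⟩)
    q ⟨hq, hqI⟩
  exact ⟨P, hqP, hP⟩

/-- For a ring `R` the following are equivalent: (a) `R` has the irreducible intersection
property; (b) for every proper ideal `I` below which there is a prime ideal, the set of
prime ideals contained in `I` has a unique maximal element; (c) for any two distinct
prime ideals `p₁, p₂` with `p₁ + p₂ ≠ R`, the set of prime ideals contained in `p₁ + p₂`
has a unique maximal element. -/
theorem irreducibleIntersectionProperty_tfae {R : Type*} [CommRing R] :
    List.TFAE
      [ IrreducibleIntersectionProperty R,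
        ∀ I : Ideal R, I ≠ ⊤ → (∃ p : Ideal R, p.IsPrime ∧ p ≤ I) →
          ∃! P : Ideal R, Maximal (fun p : Ideal R => p.IsPrime ∧ p ≤ I) P,
        ∀ p₁ p₂ : Ideal R, p₁.IsPrime → p₂.IsPrime → p₁ ≠ p₂ → p₁ + p₂ ≠ ⊤ →
          ∃! P : Ideal R, Maximal (fun p : Ideal R => p.IsPrime ∧ p ≤ p₁ + p₂) P ] := by
  tfae_have 1 → 2 := by
    intro h I hI ⟨q, hq, hqI⟩
    obtain ⟨P, _, hP⟩ := exists_maximal_prime_le hq hqI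
    refine ⟨P, hP, fun Q hQ => ?_⟩
    have hsum : P + Q ≠ ⊤ := fun ht =>
      hI (top_le_iff.1 (ht ▸ sup_le hP.prop.2 hQ.prop.2))
    rcases h P Q hP.prop.1 hQ.prop.1 with ht | hpr
    · exact absurd ht hsum
    · have hle : P + Q ≤ I := sup_le hP.prop.2 hQ.prop.2
      have h1 : P = P + Q := le_antisymm le_sup_left (hP.le_of_ge ⟨hpr, hle⟩ le_sup_left)
      have h2 : Q = P + Q := le_antisymm le_sup_right (hQ.le_of_ge ⟨hpr, hle⟩ le_sup_right)
      rw [h2, ← h1]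
  tfae_have 2 → 3 := by
    intro h p₁ p₂ h₁ h₂ _ hne
    exact h _ hne ⟨p₁, h₁, le_sup_left⟩
  tfae_have 3 → 1 := by
    intro h p₁ p₂ h₁ h₂
    by_cases hne : p₁ + p₂ = ⊤
    · exact Or.inl hne
    right
    by_cases heq : p₁ = p₂
    · subst heq
      simpa using h₁
    obtain ⟨P, hP, huniq⟩ := h p₁ p₂ h₁ h₂ heq hne
    obtain ⟨P₁, hle₁, hP₁⟩ := exists_maximal_prime_le h₁ (le_sup_left : p₁ ≤ p₁ + p₂)
    obtain ⟨P₂, hle₂, hP₂⟩ := exists_maximal_prime_le h₂ (le_sup_right : p₂ ≤ p₁ + p₂)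
    have e1 := huniq P₁ hP₁
    have e2 := huniq P₂ hP₂
    have : p₁ + p₂ = P := le_antisymm
      (sup_le (e1 ▸ hle₁) (e2 ▸ hle₂)) hP.prop.2
    rw [this]; exact hP.prop.1
  tfae_finish
end

section
/- Let A be a ring satisfying the irreducible intersection property and let φ : A → B be an injective ring homomorphism such that (i) for every prime ideal p ⊆ A there exists a prime ideal q ⊆ B with q ∩ A = p (lying over), and (ii) for every prime ideal q ⊆ B, the extension of its contraction satisfies (q ∩ A)B = q. Then B satisfies the irreducible intersection property. -/
/-- Let `A` satisfy the irreducible intersection property and let `φ : A → B` be an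
injective ring map satisfying lying over and such that every prime of `B` is the extension
of its contraction. Then `B` satisfies the irreducible intersection property. -/
theorem irreducibleIntersectionProperty_of_liesOver {A B : Type*} [CommRing A]
    [CommRing B] (hA : IrreducibleIntersectionProperty A) (φ : A →+* B)
    (hinj : Function.Injective φ)
    (h1 : ∀ p : Ideal A, p.IsPrime → ∃ q : Ideal B, q.IsPrime ∧ q.comap φ = p)
    (h2 : ∀ q : Ideal B, q.IsPrime → (q.comap φ).map φ = q) :
    IrreducibleIntersectionProperty B := by
  intro q₁ q₂ hq₁ hq₂
  have hp₁ : (q₁.comap φ).IsPrime := hq₁.comap φ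
  have hp₂ : (q₂.comap φ).IsPrime := hq₂.comap φ
  have key : q₁ + q₂ = ((q₁.comap φ) + (q₂.comap φ)).map φ := by
    rw [Submodule.add_eq_sup, Submodule.add_eq_sup, Ideal.map_sup, h2 q₁ hq₁, h2 q₂ hq₂]
  rcases hA _ _ hp₁ hp₂ with h | h
  · left
    rw [key, h, Ideal.map_top]
  · right
    obtain ⟨q, hq, hcq⟩ := h1 _ h
    rw [key, ← hcq, h2 q hq]
    exact hq
end

section
/- Let φ : A → B be a ring homomorphism such that (i) for every prime ideal p ⊆ A, the extended ideal pB is a prime ideal of B, and (ii) for every ideal I ⊆ A, the contraction of the extension satisfies IB ∩ A = I. If B satisfies the irreducible intersection property, then A satisfies the irreducible intersection property. In particular, if the polynomial ring A[x₁, …, x_n] satisfies the irreducible intersection property, then so does A. -/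
universe u

lemma map_C_isPrime {A : Type u} [CommRing A] {n : ℕ} (p : Ideal A) (hp : p.IsPrime) :
    (p.map (MvPolynomial.C : A →+* MvPolynomial (Fin n) A)).IsPrime := by
  have h : p.map (MvPolynomial.C : A →+* MvPolynomial (Fin n) A)
      = RingHom.ker (MvPolynomial.map (Ideal.Quotient.mk p) :
          MvPolynomial (Fin n) A →+* MvPolynomial (Fin n) (A ⧸ p)) := by
    rw [MvPolynomial.ker_map, Ideal.mk_ker]
  rw [h]
  exact RingHom.ker_isPrime _

lemma comap_map_C {A : Type u} [CommRing A] {n : ℕ} (I : Ideal A) :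
    ((I.map (MvPolynomial.C : A →+* MvPolynomial (Fin n) A)).comap
      (MvPolynomial.C : A →+* MvPolynomial (Fin n) A)) = I := by
  ext x
  rw [Ideal.mem_comap, MvPolynomial.mem_map_C_iff]
  constructor
  · intro h
    simpa using h 0
  · intro h m
    rw [MvPolynomial.coeff_C]
    split <;> simp [h, I.zero_mem]

/-- If `φ : A → B` is a ring map such that the extension of every prime ideal of `A` is
prime and every ideal of `A` is the contraction of its extension, then the irreducible
intersection property descends from `B` to `A`.  In particular, if a polynomial ring
`A[x₁, …, x_n]` satisfies the irreducible intersection property, then so does `A`. -/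
theorem irreducibleIntersectionProperty_descends :
    (∀ (A B : Type u) [CommRing A] [CommRing B] (φ : A →+* B),
        (∀ p : Ideal A, p.IsPrime → (p.map φ).IsPrime) →
        (∀ I : Ideal A, (I.map φ).comap φ = I) →
        IrreducibleIntersectionProperty B → IrreducibleIntersectionProperty A) ∧
      (∀ (A : Type u) [CommRing A] (n : ℕ),
        IrreducibleIntersectionProperty (MvPolynomial (Fin n) A) →
        IrreducibleIntersectionProperty A) := by
  have main : ∀ (A B : Type u) [CommRing A] [CommRing B] (φ : A →+* B),
      (∀ p : Ideal A, p.IsPrime → (p.map φ).IsPrime) →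
      (∀ I : Ideal A, (I.map φ).comap φ = I) →
      IrreducibleIntersectionProperty B → IrreducibleIntersectionProperty A := by
    intro A B _ _ φ hprime hcomap hB p₁ p₂ h₁ h₂
    have hmap : (p₁ + p₂).map φ = p₁.map φ + p₂.map φ := by
      rw [Ideal.add_eq_sup, Ideal.add_eq_sup, Ideal.map_sup]
    rcases hB (p₁.map φ) (p₂.map φ) (hprime p₁ h₁) (hprime p₂ h₂) with h | h
    · left
      have := hcomap (p₁ + p₂)
      rw [hmap, h, Ideal.comap_top] at this
      exact this.symm
    · right
      rw [← hcomap (p₁ + p₂)]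
      rw [hmap] at *
      exact h.comap φ
  refine ⟨main, fun A _ n hB => ?_⟩
  exact main A (MvPolynomial (Fin n) A) MvPolynomial.C
    (fun p hp => map_C_isPrime p hp) (fun I => comap_map_C I) hB
end

section
/- Let R be a quadratically closed ring. Then there is no polygon in R: there do not exist an integer n > 2 and prime ideals P₀, …, P_{n−1} and Q₀, …, Q_{n−1} of R such that P_i ⊆ Q_j if and only if i = j or i = j + 1 (mod n). More generally, for every m ≥ 1, a 2m-adically closed ring has no polygons. -/
universe u

/-- A *polygon* in a ring `R` consists of an integer `n > 2` and prime ideals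
`P₀, …, P_{n-1}` (generic points of the irreducible closed sets `C_i = V(P_i)`) and
`Q₀, …, Q_{n-1}` (generic points of `D_j = V(Q_j)`) such that `D_j ⊆ C_i`, i.e.
`P_i ⊆ Q_j`, if and only if `i = j` or `i = j + 1 (mod n)`. -/
def HasPolygon (R : Type*) [CommRing R] : Prop :=
  ∃ n : ℕ, 2 < n ∧ ∃ P Q : ZMod n → Ideal R,
    (∀ i, (P i).IsPrime) ∧ (∀ j, (Q j).IsPrime) ∧
      ∀ i j, P i ≤ Q j ↔ (i = j ∨ i = j + 1)

open Polynomial in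
lemma no_polygons_aux {R : Type u} [CommRing R] {m : ℕ} (hm : 1 ≤ m)
    (hR : AdicallyClosed (2 * m) R) : ¬ HasPolygon R := by
  classical
  rintro ⟨n, hn, P, Q, hP, hQ, hPQ⟩
  -- the ring is nontrivial since it has a prime ideal
  rcases subsingleton_or_nontrivial R with htriv | hntriv
  · exact (hQ 0).ne_top ((Ideal.eq_top_iff_one _).mpr (by
      have h1 : (1 : R) = 0 := Subsingleton.elim _ _
      rw [h1]; exact (Q 0).zero_mem))
  -- the inclusion pattern, in natural-number indices
  have key : ∀ i j : ℕ, i < n → j < n →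
      (P (i : ZMod n) ≤ Q (j : ZMod n) ↔ (i = j ∨ i = j + 1 ∨ (i = 0 ∧ j = n - 1))) := by
    intro i j hi hj
    rw [hPQ]
    have h1 : ((i : ZMod n) = (j : ZMod n)) ↔ i % n = j % n :=
      ZMod.natCast_eq_natCast_iff' i j n
    have h2 : ((i : ZMod n) = (j : ZMod n) + 1) ↔ i % n = (j + 1) % n := by
      have h3 : ((j : ZMod n) + 1) = ((j + 1 : ℕ) : ZMod n) := by push_cast; ring
      rw [h3]
      exact ZMod.natCast_eq_natCast_iff' i (j + 1) n
    rw [h1, h2, Nat.mod_eq_of_lt hi, Nat.mod_eq_of_lt hj]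
    by_cases hj1 : j + 1 < n
    · rw [Nat.mod_eq_of_lt hj1]; omega
    · have hjn : (j + 1) % n = 0 := by
        have : j + 1 = n := by omega
        rw [this, Nat.mod_self]
      rw [hjn]; omega
  have hle : ∀ i j : ℕ, i < n → j < n → (i = j ∨ i = j + 1 ∨ (i = 0 ∧ j = n - 1)) →
      P (i : ZMod n) ≤ Q (j : ZMod n) := fun i j hi hj h => (key i j hi hj).mpr h
  have hnle : ∀ i j : ℕ, i < n → j < n → ¬(i = j ∨ i = j + 1 ∨ (i = 0 ∧ j = n - 1)) →
      ¬ P (i : ZMod n) ≤ Q (j : ZMod n) := fun i j hi hj h hc => h ((key i j hi hj).mp hc)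
  -- a product of elements not in a prime ideal is not in it
  have hprodnot : ∀ (I : Ideal R), I.IsPrime → ∀ (s : Finset ℕ) (f : ℕ → R),
      (∀ x ∈ s, f x ∉ I) → (∏ x ∈ s, f x) ∉ I := by
    intro I hI s f
    induction s using Finset.induction_on with
    | empty =>
      intro _ hmem
      rw [Finset.prod_empty] at hmem
      exact hI.ne_top ((Ideal.eq_top_iff_one I).mpr hmem)
    | @insert x s hxs ih =>
      intro hf hmem
      rw [Finset.prod_insert hxs] at hmem
      rcases hI.mem_or_mem hmem with h | h
      · exact hf x (Finset.mem_insert_self _ _) h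
      · exact ih (fun y hy => hf y (Finset.mem_insert_of_mem hy)) h
  -- choose aᵢ ∈ Pᵢ \ Q_{n-1} for 1 ≤ i ≤ n-2
  have haex : ∀ i : ℕ, ∃ x : R, (1 ≤ i ∧ i ≤ n - 2) →
      (x ∈ P (i : ZMod n) ∧ x ∉ Q ((n - 1 : ℕ) : ZMod n)) := by
    intro i
    by_cases h : 1 ≤ i ∧ i ≤ n - 2
    · have hnl : ¬ P (i : ZMod n) ≤ Q ((n - 1 : ℕ) : ZMod n) :=
        hnle i (n - 1) (by omega) (by omega) (by omega)
      obtain ⟨x, hx1, hx2⟩ := SetLike.not_le_iff_exists.mp hnl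
      exact ⟨x, fun _ => ⟨hx1, hx2⟩⟩
    · exact ⟨0, fun h' => absurd h' h⟩
  choose a ha using haex
  have haP : ∀ i, 1 ≤ i → i ≤ n - 2 → a i ∈ P (i : ZMod n) := fun i h1 h2 => (ha i ⟨h1, h2⟩).1
  have haQ : ∀ i, 1 ≤ i → i ≤ n - 2 → a i ∉ Q ((n - 1 : ℕ) : ZMod n) :=
    fun i h1 h2 => (ha i ⟨h1, h2⟩).2
  -- choose qqⱼ ∈ Qⱼ \ Q_{n-2} for 1 ≤ j ≤ n-3
  have hqex : ∀ j : ℕ, ∃ x : R, (1 ≤ j ∧ j ≤ n - 3) →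
      (x ∈ Q (j : ZMod n) ∧ x ∉ Q ((n - 2 : ℕ) : ZMod n)) := by
    intro j
    by_cases h : 1 ≤ j ∧ j ≤ n - 3
    · have h1 : ¬ P (j : ZMod n) ≤ Q ((n - 2 : ℕ) : ZMod n) :=
        hnle j (n - 2) (by omega) (by omega) (by omega)
      have h2 : P (j : ZMod n) ≤ Q (j : ZMod n) :=
        hle j j (by omega) (by omega) (Or.inl rfl)
      have h3 : ¬ Q (j : ZMod n) ≤ Q ((n - 2 : ℕ) : ZMod n) := fun hc => h1 (h2.trans hc)
      obtain ⟨x, hx1, hx2⟩ := SetLike.not_le_iff_exists.mp h3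
      exact ⟨x, fun _ => ⟨hx1, hx2⟩⟩
    · exact ⟨0, fun h' => absurd h' h⟩
  choose qq hqq using hqex
  -- choose p0 ∈ P₀ \ Q_{n-2}
  obtain ⟨p0, hp0P, hp0Q⟩ := SetLike.not_le_iff_exists.mp
    (hnle 0 (n - 2) (by omega) (by omega) (by omega))
  -- choose b ∈ P_{n-1} avoiding all Q_j with j ∉ {n-2, n-1}  (prime avoidance)
  have hbex : ∃ x : R, x ∈ P ((n - 1 : ℕ) : ZMod n) ∧
      ∀ j : ℕ, j < n → j ≠ n - 2 → j ≠ n - 1 → x ∉ Q (j : ZMod n) := by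
    set s : Finset ℕ := (Finset.range n).filter (fun j => j ≠ n - 2 ∧ j ≠ n - 1) with hs
    have hsub := Ideal.subset_union_prime (s := s) (f := fun j : ℕ => Q ((j : ℕ) : ZMod n))
      (I := P ((n - 1 : ℕ) : ZMod n)) 0 0 (fun j _ _ _ => hQ _)
    have hnsub : ¬ ∃ j ∈ s, P ((n - 1 : ℕ) : ZMod n) ≤ Q ((j : ℕ) : ZMod n) := by
      rintro ⟨j, hjs, hjle⟩
      simp only [hs, Finset.mem_filter, Finset.mem_range] at hjs
      exact hnle (n - 1) j (by omega) (by omega) (by omega) hjle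
    have hnsub2 : ¬ ((P ((n - 1 : ℕ) : ZMod n) : Set R) ⊆
        ⋃ j ∈ (↑s : Set ℕ), (Q ((j : ℕ) : ZMod n) : Set R)) :=
      fun hc => hnsub (hsub.mp hc)
    obtain ⟨x, hx1, hx2⟩ := Set.not_subset.mp hnsub2
    refine ⟨x, hx1, fun j hj hj2 hj3 hxQ => hx2 ?_⟩
    have hjs : j ∈ s := by
      simp only [hs, Finset.mem_filter, Finset.mem_range]
      exact ⟨hj, hj2, hj3⟩
    exact Set.mem_biUnion hjs hxQ
  obtain ⟨b, hbP, hbQ⟩ := hbex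
  -- the main elements
  set g : R := ∏ i ∈ Finset.Icc 1 (n - 2), a i with hg
  set t : R := p0 * ∏ j ∈ Finset.Icc 1 (n - 3), qq j with ht
  set A : R := g * b with hA
  set σ : R := b + (g + t) with hσ
  -- membership facts for g
  have hgmem : ∀ i, 1 ≤ i → i ≤ n - 2 → ∀ (I : Ideal R), a i ∈ I → g ∈ I := by
    intro i h1 h2 I haI
    rw [hg, ← Finset.mul_prod_erase _ _ (Finset.mem_Icc.mpr ⟨h1, h2⟩)]
    exact Ideal.mul_mem_right _ _ haI
  have hgQ : ∀ j, j < n - 1 → g ∈ Q ((j : ℕ) : ZMod n) := by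
    intro j hj
    rcases eq_or_lt_of_le (show j ≤ n - 2 by omega) with hj2 | hj2
    · subst hj2
      exact hgmem (n - 2) (by omega) le_rfl _
        (hle (n - 2) (n - 2) (by omega) (by omega) (Or.inl rfl)
          (haP (n - 2) (by omega) le_rfl))
    · exact hgmem (j + 1) (by omega) (by omega) _
        (hle (j + 1) j (by omega) (by omega) (Or.inr (Or.inl rfl))
          (haP (j + 1) (by omega) (by omega)))
  have hgQn1 : g ∉ Q ((n - 1 : ℕ) : ZMod n) := by
    rw [hg]
    exact hprodnot _ (hQ _) _ _
      (fun x hx => haQ x (Finset.mem_Icc.mp hx).1 (Finset.mem_Icc.mp hx).2)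
  -- membership facts for t
  have htP0 : t ∈ P ((0 : ℕ) : ZMod n) := by
    rw [ht]; exact Ideal.mul_mem_right _ _ hp0P
  have htQmid : ∀ j, 1 ≤ j → j ≤ n - 3 → t ∈ Q ((j : ℕ) : ZMod n) := by
    intro j h1 h2
    rw [ht]
    refine Ideal.mul_mem_left _ _ ?_
    rw [← Finset.mul_prod_erase _ _ (Finset.mem_Icc.mpr ⟨h1, h2⟩)]
    exact Ideal.mul_mem_right _ _ (hqq j ⟨h1, h2⟩).1
  have htQn2 : t ∉ Q ((n - 2 : ℕ) : ZMod n) := by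
    rw [ht]
    intro hc
    rcases (hQ _).mem_or_mem hc with h | h
    · exact hp0Q h
    · exact hprodnot _ (hQ _) _ _ (fun x hx => (hqq x (Finset.mem_Icc.mp hx)).2) h
  -- useful inclusions
  have hP0Q0 : P ((0 : ℕ) : ZMod n) ≤ Q ((0 : ℕ) : ZMod n) :=
    hle 0 0 (by omega) (by omega) (Or.inl rfl)
  have hP0Qn1 : P ((0 : ℕ) : ZMod n) ≤ Q ((n - 1 : ℕ) : ZMod n) :=
    hle 0 (n - 1) (by omega) (by omega) (Or.inr (Or.inr ⟨rfl, rfl⟩))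
  have hbQn1 : b ∈ Q ((n - 1 : ℕ) : ZMod n) :=
    hle (n - 1) (n - 1) (by omega) (by omega) (Or.inl rfl) hbP
  have hbQn2 : b ∈ Q ((n - 2 : ℕ) : ZMod n) :=
    hle (n - 1) (n - 2) (by omega) (by omega) (Or.inr (Or.inl (by omega))) hbP
  -- σ avoids every Q_j
  have hσQ : ∀ j, j < n → σ ∉ Q ((j : ℕ) : ZMod n) := by
    intro j hj hc
    rw [hσ] at hc
    by_cases h0 : j = 0
    · subst h0
      have hgt : g + t ∈ Q ((0 : ℕ) : ZMod n) :=
        Ideal.add_mem _ (hgQ 0 (by omega)) (hP0Q0 htP0)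
      have hb0 : b ∈ Q ((0 : ℕ) : ZMod n) := by
        have h4 := Ideal.sub_mem _ hc hgt
        simpa using h4
      exact hbQ 0 (by omega) (by omega) (by omega) hb0
    by_cases h1 : j = n - 1
    · subst h1
      have h4 : g ∈ Q ((n - 1 : ℕ) : ZMod n) := by
        have h5 := Ideal.sub_mem _ (Ideal.sub_mem _ hc hbQn1) (hP0Qn1 htP0)
        simpa using h5
      exact hgQn1 h4
    by_cases h2 : j = n - 2
    · subst h2
      have h4 : t ∈ Q ((n - 2 : ℕ) : ZMod n) := by
        have h5 := Ideal.sub_mem _ (Ideal.sub_mem _ hc hbQn2) (hgQ (n - 2) (by omega))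
        simpa using h5
      exact htQn2 h4
    · -- middle case : 1 ≤ j ≤ n-3
      have h4 : b ∈ Q ((j : ℕ) : ZMod n) := by
        have h5 := Ideal.sub_mem _ hc
          (Ideal.add_mem _ (hgQ j (by omega)) (htQmid j (by omega) (by omega)))
        simpa using h5
      exact hbQ j hj h2 h1 h4
  -- A belongs to every P_i with 1 ≤ i ≤ n-1
  have hAP : ∀ i, 1 ≤ i → i ≤ n - 1 → A ∈ P ((i : ℕ) : ZMod n) := by
    intro i h1 h2
    by_cases h : i = n - 1
    · subst h; rw [hA]; exact Ideal.mul_mem_left _ _ hbP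
    · rw [hA]
      exact Ideal.mul_mem_right _ _ (hgmem i h1 (by omega) _ (haP i h1 (by omega)))
  -- get a root of (X² - σX + A)^m
  have hq2monic : (X ^ 2 + C (-σ) * X + C A : R[X]).Monic := by
    have h := Polynomial.monic_X_pow_add (p := C (-σ) * X + C A) (n := 2)
      Polynomial.degree_linear_lt
    have heq : (X ^ 2 + (C (-σ) * X + C A) : R[X]) = X ^ 2 + C (-σ) * X + C A := by ring
    rwa [heq] at h
  have hq2deg : (X ^ 2 + C (-σ) * X + C A : R[X]).natDegree = 2 := by
    have h1 : (X ^ 2 + C (-σ) * X + C A : R[X]) = C 1 * X ^ 2 + C (-σ) * X + C A := by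
      rw [map_one, one_mul]
    rw [h1, Polynomial.natDegree_quadratic one_ne_zero]
  obtain ⟨r, hr⟩ := hR ((X ^ 2 + C (-σ) * X + C A) ^ m) (hq2monic.pow m)
    (by rw [hq2monic.natDegree_pow, hq2deg]; ring)
  have hroot : Polynomial.eval r ((X ^ 2 + C (-σ) * X + C A : R[X]) ^ m) = 0 := hr
  have hν0 : (r ^ 2 - σ * r + A) ^ m = 0 := by
    have h2 : Polynomial.eval r ((X ^ 2 + C (-σ) * X + C A : R[X]) ^ m)
        = (r ^ 2 + (-σ) * r + A) ^ m := by simp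
    rw [h2] at hroot
    calc (r ^ 2 - σ * r + A) ^ m = (r ^ 2 + (-σ) * r + A) ^ m := by ring
    _ = 0 := hroot
  have hνmem : ∀ (I : Ideal R), I.IsPrime → r ^ 2 - σ * r + A ∈ I := by
    intro I hI
    refine hI.mem_of_pow_mem m ?_
    rw [hν0]; exact I.zero_mem
  -- exclusivity at each Q_j
  have hnot2 : ∀ j, j < n → r ∈ Q ((j : ℕ) : ZMod n) → r - σ ∈ Q ((j : ℕ) : ZMod n) → False := by
    intro j hj h1 h2
    have h3 : σ ∈ Q ((j : ℕ) : ZMod n) := by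
      have h4 := Ideal.sub_mem _ h1 h2
      simpa using h4
    exact hσQ j hj h3
  -- the chain of equivalences along the edges P₁, …, P_{n-1}
  have edge : ∀ j, j + 1 ≤ n - 1 →
      (r ∈ Q ((j : ℕ) : ZMod n) ↔ r ∈ Q (((j + 1 : ℕ)) : ZMod n)) := by
    intro j hj
    have hA' : A ∈ P (((j + 1 : ℕ)) : ZMod n) := hAP (j + 1) (by omega) (by omega)
    have h1 : r * (r - σ) ∈ P (((j + 1 : ℕ)) : ZMod n) := by
      have h2 := hνmem _ (hP (((j + 1 : ℕ)) : ZMod n))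
      have h3 := Ideal.sub_mem _ h2 hA'
      have heq : r ^ 2 - σ * r + A - A = r * (r - σ) := by ring
      rwa [heq] at h3
    have hle1 : P (((j + 1 : ℕ)) : ZMod n) ≤ Q ((j : ℕ) : ZMod n) :=
      hle (j + 1) j (by omega) (by omega) (Or.inr (Or.inl rfl))
    have hle2 : P (((j + 1 : ℕ)) : ZMod n) ≤ Q (((j + 1 : ℕ)) : ZMod n) :=
      hle (j + 1) (j + 1) (by omega) (by omega) (Or.inl rfl)
    rcases (hP _).mem_or_mem h1 with h | h
    · exact ⟨fun _ => hle2 h, fun _ => hle1 h⟩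
    · constructor
      · intro hr0; exact absurd (hnot2 j (by omega) hr0 (hle1 h)) not_false
      · intro hr0; exact absurd (hnot2 (j + 1) (by omega) hr0 (hle2 h)) not_false
  have chain : ∀ j, j ≤ n - 1 → (r ∈ Q ((0 : ℕ) : ZMod n) ↔ r ∈ Q ((j : ℕ) : ZMod n)) := by
    intro j
    induction j with
    | zero => exact fun _ => Iff.rfl
    | succ k ih => exact fun hk => (ih (by omega)).trans (edge k hk)
  -- the factorization modulo P₀
  have hfac : (r - b) * (r - (g + t)) ∈ P ((0 : ℕ) : ZMod n) := by
    have h1 := hνmem _ (hP ((0 : ℕ) : ZMod n))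
    have h2 : b * t ∈ P ((0 : ℕ) : ZMod n) := Ideal.mul_mem_left _ _ htP0
    have heq : (r - b) * (r - (g + t)) = (r ^ 2 - σ * r + A) + b * t := by
      rw [hσ, hA]; ring
    rw [heq]; exact Ideal.add_mem _ h1 h2
  rcases (hP _).mem_or_mem hfac with hcase | hcase
  · -- r ≡ b mod P₀ : then r ∈ Q_{n-1} but b ∉ Q₀
    have hrQ : r ∈ Q ((n - 1 : ℕ) : ZMod n) := by
      have h1 : r - b ∈ Q ((n - 1 : ℕ) : ZMod n) := hP0Qn1 hcase
      have h2 := Ideal.add_mem _ h1 hbQn1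
      simpa using h2
    have hrQ0 : r ∈ Q ((0 : ℕ) : ZMod n) := (chain (n - 1) le_rfl).mpr hrQ
    have h2 : r - b ∈ Q ((0 : ℕ) : ZMod n) := hP0Q0 hcase
    have h3 : b ∈ Q ((0 : ℕ) : ZMod n) := by
      have h4 := Ideal.sub_mem _ hrQ0 h2
      simpa using h4
    exact hbQ 0 (by omega) (by omega) (by omega) h3
  · -- r ≡ g + t mod P₀ : then r ∈ Q₀ but g ∉ Q_{n-1}
    have hgt0 : g + t ∈ Q ((0 : ℕ) : ZMod n) :=
      Ideal.add_mem _ (hgQ 0 (by omega)) (hP0Q0 htP0)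
    have hrQ0 : r ∈ Q ((0 : ℕ) : ZMod n) := by
      have h1 : r - (g + t) ∈ Q ((0 : ℕ) : ZMod n) := hP0Q0 hcase
      have h2 := Ideal.add_mem _ h1 hgt0
      simpa using h2
    have hrQn1 : r ∈ Q ((n - 1 : ℕ) : ZMod n) := (chain (n - 1) le_rfl).mp hrQ0
    have h1 : r - (g + t) ∈ Q ((n - 1 : ℕ) : ZMod n) := hP0Qn1 hcase
    have h2 : g + t ∈ Q ((n - 1 : ℕ) : ZMod n) := by
      have h4 := Ideal.sub_mem _ hrQn1 h1
      simpa using h4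
    have h3 : g ∈ Q ((n - 1 : ℕ) : ZMod n) := by
      have h4 := Ideal.sub_mem _ h2 (hP0Qn1 htP0)
      simpa using h4
    exact hgQn1 h3

/-- A quadratically closed ring has no polygons; more generally, for every `m ≥ 1`, a
`2m`-adically closed ring has no polygons. -/
theorem no_polygons :
    (∀ (R : Type u) [CommRing R], QuadraticallyClosed R → ¬ HasPolygon R) ∧
      (∀ m : ℕ, 1 ≤ m → ∀ (R : Type u) [CommRing R],
        AdicallyClosed (2 * m) R → ¬ HasPolygon R) := by
  constructor
  · intro R _ hQC
    refine no_polygons_aux (m := 1) le_rfl ?_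
    intro p hp hdeg
    exact hQC p hp (by omega)
  · intro m hm R _ hAC
    exact no_polygons_aux hm hAC
end
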